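/- Let β > 0 and let k be a positive integer. For every ζ in the strip S_β the quotient (ζ²+β²)/(ζ²+2β²) lies in ℂ ∖ (−∞,0], so the function g(ζ) = ((ζ²+β²)/(ζ²+2β²))^{k−1/2}, defined using the principal branch power, is well defined, holomorphic and even on S_β. Moreover, for every nonnegative integer J ≤ k−1 there exists a constant C = C(β,k,J) such that |g^{(j)}(ζ)| ≤ C (1+|ζ|)^{−j} for all ζ ∈ S_β and all j ∈ {0, 1, …, J}; that is, g ∈ H^∞(S_β;J). (This is the multiplier estimate for the operator 𝓛^{k−1/2}(β²I+𝓛)^{1/2−k} with b = β², used in the proof of the Riesz transform theorem, Theorem 4.5 of the paper.) -/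

import Mathlib

noncomputable section

/-- The multiplier `g(ζ) = ((ζ²+β²)/(ζ²+2β²))^{k-1/2}`, with the principal branch power. -/
def gFun (β : ℝ) (k : ℕ) : ℂ → ℂ := fun ζ =>
  ((ζ ^ 2 + (β : ℂ) ^ 2) / (ζ ^ 2 + 2 * (β : ℂ) ^ 2)) ^ ((k : ℂ) - 1 / 2)

namespace Stmt7Aux

open Complex Polynomial


variable {β : ℝ}

/-- denominator -/
def DD (β : ℝ) (ζ : ℂ) : ℂ := ζ^2 + 2*(β:ℂ)^2
/-- numerator -/
def NN (β : ℝ) (ζ : ℂ) : ℂ := ζ^2 + (β:ℂ)^2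
/-- quotient -/
def qq (β : ℝ) (ζ : ℂ) : ℂ := NN β ζ / DD β ζ

lemma reD (ζ : ℂ) : (DD β ζ).re = ζ.re^2 - ζ.im^2 + 2*β^2 := by
  simp [DD, pow_two, Complex.add_re, Complex.mul_re]

lemma reN (ζ : ℂ) : (NN β ζ).re = ζ.re^2 - ζ.im^2 + β^2 := by
  simp [NN, pow_two, Complex.add_re, Complex.mul_re]

lemma imD (ζ : ℂ) : (DD β ζ).im = 2*ζ.re*ζ.im := by
  simp [DD, pow_two, Complex.mul_im]
  ring

lemma imN (ζ : ℂ) : (NN β ζ).im = 2*ζ.re*ζ.im := by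
  simp [NN, pow_two, Complex.mul_im]
  ring

lemma reD_pos (hβ : 0 < β) {ζ : ℂ} (hζ : |ζ.im| < β) : ζ.re^2 + β^2 ≤ (DD β ζ).re := by
  rw [reD]
  have := abs_lt.mp hζ
  nlinarith

lemma absD_ge (hβ : 0 < β) {ζ : ℂ} (hζ : |ζ.im| < β) :
    min (β^2) 1 / 4 * (1 + ‖ζ‖)^2 ≤ ‖DD β ζ‖ := by
  have h1 : ζ.re^2 + β^2 ≤ ‖DD β ζ‖ :=
    le_trans (reD_pos hβ hζ) (le_trans (le_abs_self _) (Complex.abs_re_le_norm _))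
  have h2 : (‖ζ‖)^2 = ζ.re^2 + ζ.im^2 := by
    rw [Complex.sq_norm, Complex.normSq_apply]; ring
  have h3 := abs_lt.mp hζ
  have h4 : (0:ℝ) ≤ ‖ζ‖ := norm_nonneg _
  have h5 : min (β^2) 1 ≤ β^2 := min_le_left _ _
  have h6 : min (β^2) 1 ≤ 1 := min_le_right _ _
  have h7 : 0 < min (β^2) 1 := lt_min (by positivity) one_pos
  nlinarith [sq_nonneg (1 - ‖ζ‖), sq_nonneg ζ.re]

lemma absD_ge_b (hβ : 0 < β) {ζ : ℂ} (hζ : |ζ.im| < β) : β^2 ≤ ‖DD β ζ‖ := by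
  have h1 : ζ.re^2 + β^2 ≤ ‖DD β ζ‖ :=
    le_trans (reD_pos hβ hζ) (le_trans (le_abs_self _) (Complex.abs_re_le_norm _))
  nlinarith [sq_nonneg ζ.re]

lemma hD_ne (hβ : 0 < β) {ζ : ℂ} (hζ : |ζ.im| < β) : DD β ζ ≠ 0 := by
  intro h
  have := absD_ge_b hβ hζ
  rw [h] at this
  simp at this
  nlinarith

lemma q_slit (hβ : 0 < β) {ζ : ℂ} (hζ : |ζ.im| < β) : qq β ζ ∈ Complex.slitPlane := by
  rw [Complex.mem_slitPlane_iff]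
  left
  rw [qq, Complex.div_re]
  have hD := hD_ne hβ hζ
  have hsq : 0 < Complex.normSq (DD β ζ) := by
    rwa [Complex.normSq_pos]
  have h3 := abs_lt.mp hζ
  have hNre : 0 < (NN β ζ).re := by rw [reN]; nlinarith
  have hDre : 0 < (DD β ζ).re := by rw [reD]; nlinarith
  have key : 0 < (NN β ζ).re * (DD β ζ).re + (NN β ζ).im * (DD β ζ).im := by
    rw [imN, imD]
    nlinarith [sq_nonneg (2*ζ.re*ζ.im)]
  rw [← add_div]
  exact div_pos key hsq

lemma q_ne (hβ : 0 < β) {ζ : ℂ} (hζ : |ζ.im| < β) : qq β ζ ≠ 0 :=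
  Complex.slitPlane_ne_zero (q_slit hβ hζ)

lemma absq_le (hβ : 0 < β) {ζ : ℂ} (hζ : |ζ.im| < β) : ‖qq β ζ‖ ≤ 2 := by
  have hDb := absD_ge_b hβ hζ
  have hD0 : (0:ℝ) < ‖DD β ζ‖ := lt_of_lt_of_le (by positivity) hDb
  have hN : ‖NN β ζ‖ ≤ ‖DD β ζ‖ + β^2 := by
    have : NN β ζ = DD β ζ - (β:ℂ)^2 := by rw [NN, DD]; ring
    rw [this, sub_eq_add_neg]
    calc ‖DD β ζ + -(β:ℂ)^2‖ ≤ ‖DD β ζ‖ + ‖-(β:ℂ)^2‖ :=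
          norm_add_le _ _
      _ = ‖DD β ζ‖ + β^2 := by
          rw [norm_neg, norm_pow, Complex.norm_real, Real.norm_of_nonneg hβ.le]
  rw [qq, norm_div, div_le_iff₀ hD0]
  nlinarith

/-- the coefficient polynomials -/
def pj (β : ℝ) (k : ℕ) : ℕ → Polynomial ℂ
  | 0 => 1
  | (j+1) =>
      Polynomial.C (2*(β:ℂ)^2*(((k:ℂ) - 1/2) - j)) * (Polynomial.X * pj β k j) +
      (Polynomial.X^2 + Polynomial.C ((β:ℂ)^2)) *
        ((Polynomial.X^2 + Polynomial.C (2*(β:ℂ)^2)) * Polynomial.derivative (pj β k j) -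
          Polynomial.C ((4*j : ℕ) : ℂ) * (Polynomial.X * pj β k j))

lemma pj_natDegree (β : ℝ) (k : ℕ) : ∀ j, (pj β k j).natDegree ≤ 3*j := by
  intro j
  induction j with
  | zero => simp [pj]
  | succ j ih =>
    have hXp : (Polynomial.X * pj β k j).natDegree ≤ 1 + 3*j := by
      refine le_trans (Polynomial.natDegree_mul_le) ?_
      exact add_le_add Polynomial.natDegree_X_le ih
    have h1 : (Polynomial.C (2*(β:ℂ)^2*(((k:ℂ) - 1/2) - j)) *
        (Polynomial.X * pj β k j)).natDegree ≤ 3*(j+1) := by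
      refine le_trans (Polynomial.natDegree_mul_le) ?_
      simp only [Polynomial.natDegree_C, zero_add]
      omega
    have hq2 : ∀ a : ℂ, (Polynomial.X^2 + Polynomial.C a : Polynomial ℂ).natDegree ≤ 2 :=
      fun a => le_trans (Polynomial.natDegree_add_le _ _)
        (by rw [Polynomial.natDegree_X_pow, Polynomial.natDegree_C]; omega)
    have hN := hq2 ((β:ℂ)^2)
    have hDp := hq2 (2*(β:ℂ)^2)
    have h2 : ((Polynomial.X^2 + Polynomial.C (2*(β:ℂ)^2)) *
        Polynomial.derivative (pj β k j) -
          Polynomial.C ((4*j : ℕ) : ℂ) * (Polynomial.X * pj β k j)).natDegree ≤ 3*j + 1 := by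
      rcases Nat.eq_zero_or_pos j with hj | hj
      · subst hj
        simp only [pj, map_zero, Polynomial.derivative_one, mul_zero, Nat.cast_zero,
          Nat.mul_zero, Nat.cast_ofNat, Polynomial.C_0, zero_mul, sub_zero]
        simp
      · refine le_trans (Polynomial.natDegree_sub_le _ _) (max_le ?_ ?_)
        · refine le_trans (Polynomial.natDegree_mul_le) ?_
          have hd : (Polynomial.derivative (pj β k j)).natDegree ≤ 3*j - 1 :=
            le_trans (Polynomial.natDegree_derivative_le _) (by omega)
          omega
        · refine le_trans (Polynomial.natDegree_mul_le) ?_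
          simp only [Polynomial.natDegree_C, zero_add]
          omega
    have h3 : ((Polynomial.X^2 + Polynomial.C ((β:ℂ)^2)) *
        ((Polynomial.X^2 + Polynomial.C (2*(β:ℂ)^2)) * Polynomial.derivative (pj β k j) -
          Polynomial.C ((4*j : ℕ) : ℂ) * (Polynomial.X * pj β k j))).natDegree ≤ 3*(j+1) := by
      refine le_trans (Polynomial.natDegree_mul_le) ?_
      omega
    rw [pj]
    exact le_trans (Polynomial.natDegree_add_le _ _) (max_le h1 h3)

/-- generic polynomial growth bound -/
lemma poly_bound (p : Polynomial ℂ) (n : ℕ) (h : p.natDegree ≤ n) :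
    ∃ C : ℝ, 0 ≤ C ∧ ∀ z : ℂ, ‖p.eval z‖ ≤ C * (1 + ‖z‖)^n := by
  refine ⟨∑ i ∈ Finset.range (p.natDegree + 1), ‖p.coeff i‖,
    Finset.sum_nonneg fun i _ => norm_nonneg _, fun z => ?_⟩
  have h1 : (0:ℝ) ≤ ‖z‖ := norm_nonneg _
  have h2 : (1:ℝ) ≤ 1 + ‖z‖ := by linarith
  rw [Polynomial.eval_eq_sum_range]
  calc ‖∑ i ∈ Finset.range (p.natDegree + 1), p.coeff i * z^i‖
      ≤ ∑ i ∈ Finset.range (p.natDegree + 1), ‖p.coeff i * z^i‖ := by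
        exact norm_sum_le _ _
    _ ≤ ∑ i ∈ Finset.range (p.natDegree + 1), ‖p.coeff i‖ * (1 + ‖z‖)^n := by
        refine Finset.sum_le_sum fun i hi => ?_
        rw [norm_mul, norm_pow]
        refine mul_le_mul_of_nonneg_left ?_ (norm_nonneg _)
        calc (‖z‖)^i ≤ (1 + ‖z‖)^i :=
              pow_le_pow_left₀ h1 (by linarith) i
          _ ≤ (1 + ‖z‖)^n := by
              refine pow_le_pow_right₀ h2 ?_
              have := Finset.mem_range.mp hi
              omega
    _ = (∑ i ∈ Finset.range (p.natDegree + 1), ‖p.coeff i‖) *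
          (1 + ‖z‖)^n := by rw [Finset.sum_mul]
lemma hasDerivAt_DD (ζ : ℂ) : HasDerivAt (DD β) (2*ζ) ζ := by
  have h := (hasDerivAt_pow 2 ζ).add_const (2*(β:ℂ)^2)
  show HasDerivAt (fun z => z^2 + 2*(β:ℂ)^2) (2*ζ) ζ
  simpa using h

lemma hasDerivAt_NN (ζ : ℂ) : HasDerivAt (NN β) (2*ζ) ζ := by
  have h := (hasDerivAt_pow 2 ζ).add_const ((β:ℂ)^2)
  show HasDerivAt (fun z => z^2 + (β:ℂ)^2) (2*ζ) ζ
  simpa using h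

lemma hasDerivAt_B (hβ : 0 < β) {ζ : ℂ} (hζ : |ζ.im| < β) (p : Polynomial ℂ) (j : ℕ) :
    HasDerivAt (fun z => p.eval z / (DD β z)^(2*j))
      (((Polynomial.derivative p).eval ζ * DD β ζ - ((4*j : ℕ) : ℂ)*ζ*p.eval ζ)
        / (DD β ζ)^(2*j+1)) ζ := by
  have hDne := hD_ne hβ hζ
  have hDd := hasDerivAt_DD (β := β) ζ
  rcases j with _ | m
  · simp only [Nat.mul_zero, pow_zero, div_one, Nat.cast_zero, mul_zero, zero_mul,
      Nat.zero_eq, pow_one]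
    have h := p.hasDerivAt ζ
    refine h.congr_deriv (Eq.symm ?_)
    field_simp
    simp
  · have hpow : HasDerivAt (fun z => (DD β z)^(2*(m+1)))
        (((2*(m+1) : ℕ) : ℂ) * (DD β ζ)^(2*m+1) * (2*ζ)) ζ := by
      have h := hDd.pow (2*(m+1))
      have e : 2*(m+1) - 1 = 2*m+1 := by omega
      rwa [e] at h
    have hdiv := (p.hasDerivAt ζ).fun_div hpow (pow_ne_zero _ hDne)
    refine hdiv.congr_deriv (Eq.symm ?_)
    have h1 : (DD β ζ)^(2*(m+1)) = (DD β ζ)^(2*m+1) * DD β ζ := by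
      rw [← pow_succ]
      congr 1
    have h2 : (DD β ζ)^(2*(m+1)+1) = (DD β ζ)^(2*m+1) * DD β ζ * DD β ζ := by
      rw [← pow_succ, ← pow_succ]
      congr 1
    have hu : (DD β ζ)^(2*m+1) ≠ 0 := pow_ne_zero _ hDne
    rw [h1, h2, div_eq_div_iff (by exact mul_ne_zero (mul_ne_zero hu hDne) hDne)
      (pow_ne_zero 2 (mul_ne_zero hu hDne))]
    push_cast
    ring

lemma strip_open (β : ℝ) : IsOpen {z : ℂ | |z.im| < β} :=
  isOpen_lt (continuous_abs.comp Complex.continuous_im) continuous_const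

lemma rep (hβ : 0 < β) (k : ℕ) :
    ∀ j : ℕ, ∀ ζ : ℂ, |ζ.im| < β →
      iteratedDeriv j (gFun β k) ζ =
        (qq β ζ)^(((k:ℂ) - 1/2) - j) * ((pj β k j).eval ζ / (DD β ζ)^(2*j)) := by
  intro j
  induction j with
  | zero =>
    intro ζ hζ
    simp [gFun, qq, NN, DD, pj, iteratedDeriv_zero]
  | succ j ih =>
    intro ζ hζ
    set α : ℂ := (k:ℂ) - 1/2 with hα
    have hev : iteratedDeriv j (gFun β k) =ᶠ[nhds ζ]
        (fun z => (qq β z)^(α - j) * ((pj β k j).eval z / (DD β z)^(2*j))) := by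
      filter_upwards [(strip_open β).mem_nhds hζ] with z hz
      exact ih z hz
    rw [iteratedDeriv_succ, hev.deriv_eq]
    have hDne := hD_ne hβ hζ
    have hqz := q_ne hβ hζ
    have hqd : HasDerivAt (qq β)
        ((2*ζ * DD β ζ - NN β ζ * (2*ζ)) / (DD β ζ)^2) ζ :=
      (hasDerivAt_NN ζ).div (hasDerivAt_DD ζ) hDne
    have hA : HasDerivAt (fun z => (qq β z)^(α - j))
        ((α - j) * (qq β ζ)^(α - j - 1)
          * ((2*ζ * DD β ζ - NN β ζ * (2*ζ)) / (DD β ζ)^2)) ζ :=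
      hqd.cpow_const (q_slit hβ hζ)
    have hB := hasDerivAt_B hβ hζ (pj β k j) j
    have hF := hA.fun_mul hB
    rw [hF.deriv]
    have hsplit : (qq β ζ)^(α - j) = (qq β ζ)^(α - j - 1) * qq β ζ := by
      have e := Complex.cpow_add (α - (j:ℂ) - 1) 1 hqz
      rw [Complex.cpow_one] at e
      rw [← e]
      congr 1
      ring
    have hexp : α - ((j+1 : ℕ):ℂ) = α - (j:ℂ) - 1 := by push_cast; ring
    rw [hexp, hsplit]
    have hpe : (pj β k (j+1)).eval ζ =
        (2*(β:ℂ)^2*(α - j)) * (ζ * (pj β k j).eval ζ) +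
        (ζ^2 + (β:ℂ)^2) * ((ζ^2 + 2*(β:ℂ)^2) * (Polynomial.derivative (pj β k j)).eval ζ -
          ((4*j : ℕ):ℂ) * (ζ * (pj β k j).eval ζ)) := by
      simp [pj, hα]
    rw [hpe]
    have h1 : (DD β ζ)^(2*(j+1)) = (DD β ζ)^(2*j) * DD β ζ * DD β ζ := by
      rw [show 2*(j+1) = 2*j+1+1 by omega, pow_succ, pow_succ]
    have h2 : (DD β ζ)^(2*j+1) = (DD β ζ)^(2*j) * DD β ζ := by
      rw [← pow_succ]
    have hu : (DD β ζ)^(2*j) ≠ 0 := pow_ne_zero _ hDne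
    rw [h1, h2]
    simp only [qq, NN, DD]
    field_simp
    try ring

lemma bound_j (hβ : 0 < β) {k : ℕ} (hk : 0 < k) (j : ℕ) (hj : j ≤ k - 1) :
    ∃ C : ℝ, 0 ≤ C ∧ ∀ ζ : ℂ, |ζ.im| < β →
      ‖iteratedDeriv j (gFun β k) ζ‖ ≤ C / (1 + ‖ζ‖)^j := by
  obtain ⟨Cp, hCp0, hCp⟩ := poly_bound (pj β k j) (3*j) (pj_natDegree β k j)
  set c : ℝ := min (β^2) 1 / 4 with hc
  have hc0 : 0 < c := by
    have h := lt_min (show (0:ℝ) < β^2 by positivity) one_pos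
    rw [hc]; linarith
  refine ⟨2^k * Cp / c^(2*j), by positivity, fun ζ hζ => ?_⟩
  rw [rep hβ k j ζ hζ]
  set a := ‖ζ‖ with haa
  have ha0 : 0 ≤ a := norm_nonneg _
  have ha1 : (0:ℝ) < 1 + a := by linarith
  have hqz := q_ne hβ hζ
  have hjk : (j:ℝ) + 1 ≤ (k:ℝ) := by exact_mod_cast (by omega : j + 1 ≤ k)
  have hrpos : (0:ℝ) ≤ (k:ℝ) - 1/2 - (j:ℝ) := by linarith
  have hr : ((k:ℂ) - 1/2 - (j:ℕ)) = ((((k:ℝ) - 1/2 - (j:ℝ)) : ℝ) : ℂ) := by push_cast; ring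
  have hT1 : ‖(qq β ζ)^((k:ℂ) - 1/2 - (j:ℕ))‖ ≤ 2^k := by
    rw [hr, Complex.norm_cpow_of_ne_zero hqz]
    simp only [Complex.ofReal_re, Complex.ofReal_im, mul_zero, Real.exp_zero, div_one]
    calc (‖qq β ζ‖) ^ ((k:ℝ) - 1/2 - (j:ℝ))
        ≤ (2:ℝ) ^ ((k:ℝ) - 1/2 - (j:ℝ)) :=
          Real.rpow_le_rpow (norm_nonneg _) (absq_le hβ hζ) hrpos
      _ ≤ (2:ℝ) ^ ((k:ℝ)) := by
          refine Real.rpow_le_rpow_of_exponent_le one_le_two ?_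
          have : (0:ℝ) ≤ (j:ℝ) := Nat.cast_nonneg _
          linarith
      _ = 2^k := by rw [Real.rpow_natCast]
  have hT2 := hCp ζ
  have hT3 : c^(2*j) * (1+a)^(4*j) ≤ ‖DD β ζ‖ ^ (2*j) := by
    have h := absD_ge hβ hζ
    calc c^(2*j)*(1+a)^(4*j) = (c*(1+a)^2)^(2*j) := by
          rw [mul_pow, ← pow_mul]
          congr 2
          omega
      _ ≤ (‖DD β ζ‖)^(2*j) := pow_le_pow_left₀ (by positivity) h _
  have hd0 : (0:ℝ) < c^(2*j)*(1+a)^(4*j) := by positivity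
  rw [norm_mul, norm_div, norm_pow]
  have step1 : ‖(pj β k j).eval ζ‖ / ‖DD β ζ‖^(2*j)
      ≤ (Cp*(1+a)^(3*j)) / (c^(2*j)*(1+a)^(4*j)) := by
    apply div_le_div₀ (by positivity) hT2 hd0 hT3
  have step2 : ‖(qq β ζ)^((k:ℂ) - 1/2 - (j:ℕ))‖ *
      (‖(pj β k j).eval ζ‖ / ‖DD β ζ‖^(2*j))
      ≤ 2^k * ((Cp*(1+a)^(3*j)) / (c^(2*j)*(1+a)^(4*j))) := by
    apply mul_le_mul hT1 step1 (by positivity) (by positivity)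
  refine le_trans step2 (le_of_eq ?_)
  rw [show 4*j = 3*j + j by ring, pow_add]
  field_simp

end Stmt7Aux

theorem stmt7 (β : ℝ) (hβ : 0 < β) (k : ℕ) (hk : 0 < k) :
    -- the quotient lies in `ℂ ∖ (-∞, 0]` on the strip `S_β`
    (∀ ζ : ℂ, |ζ.im| < β →
      (ζ ^ 2 + (β : ℂ) ^ 2) / (ζ ^ 2 + 2 * (β : ℂ) ^ 2) ∈ Complex.slitPlane) ∧
    -- `g` is holomorphic on `S_β`
    DifferentiableOn ℂ (gFun β k) {ζ : ℂ | |ζ.im| < β} ∧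
    -- `g` is even on `S_β`
    (∀ ζ : ℂ, |ζ.im| < β → gFun β k (-ζ) = gFun β k ζ) ∧
    -- for every `J ≤ k-1` there is `C = C(β,k,J)` with `|g⁽ʲ⁾(ζ)| ≤ C (1+|ζ|)^{-j}` on `S_β`
    ∀ J : ℕ, J ≤ k - 1 → ∃ C : ℝ, ∀ ζ : ℂ, |ζ.im| < β → ∀ j : ℕ, j ≤ J →
      ‖iteratedDeriv j (gFun β k) ζ‖ ≤ C / (1 + ‖ζ‖) ^ j := by
  refine ⟨fun ζ hζ => Stmt7Aux.q_slit hβ hζ, ?_, ?_, ?_⟩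
  · intro ζ hζ
    have hqd : HasDerivAt (Stmt7Aux.qq β)
        ((2*ζ * Stmt7Aux.DD β ζ - Stmt7Aux.NN β ζ * (2*ζ)) / (Stmt7Aux.DD β ζ)^2) ζ :=
      (Stmt7Aux.hasDerivAt_NN ζ).div (Stmt7Aux.hasDerivAt_DD ζ) (Stmt7Aux.hD_ne hβ hζ)
    have h := (hqd.cpow_const (c := (k:ℂ) - 1/2) (Stmt7Aux.q_slit hβ hζ)).differentiableAt
    exact h.differentiableWithinAt
  · intro ζ _
    unfold gFun
    rw [show (-ζ)^2 = ζ^2 from by ring]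
  · intro J hJ
    classical
    have hx : ∀ j, j ≤ J → ∃ C, 0 ≤ C ∧ ∀ ζ : ℂ, |ζ.im| < β →
        ‖iteratedDeriv j (gFun β k) ζ‖ ≤ C/(1+‖ζ‖)^j :=
      fun j hj => Stmt7Aux.bound_j hβ hk j (le_trans hj hJ)
    refine ⟨∑ i ∈ Finset.range (J+1), (if h : i ≤ J then (hx i h).choose else 0),
      fun ζ hζ j hj => ?_⟩
    have h1 := (hx j hj).choose_spec.2 ζ hζ
    have ha1 : (0:ℝ) < 1 + ‖ζ‖ := by
      have := norm_nonneg ζ; linarith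
    have hle : (hx j hj).choose ≤
        ∑ i ∈ Finset.range (J+1), (if h : i ≤ J then (hx i h).choose else 0) := by
      have := Finset.single_le_sum
        (f := fun i => (if h : i ≤ J then (hx i h).choose else 0))
        (fun i _ => ?_) (Finset.mem_range.mpr (by omega : j < J+1))
      · simpa [dif_pos hj] using this
      · by_cases h : i ≤ J
        · simpa [dif_pos h] using (hx i h).choose_spec.1
        · simp [dif_neg h]
    refine le_trans h1 ?_
    gcongr
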